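/- arXiv:2602.04682 — 3 statements merged into one kernel-verified Lean document; each statement's English description precedes it below -/
import Mathlib

section
/- Deterministic core of Theorem 1(a) (prediction error for the group lasso with known design): let k ≥ 1, n ≥ 1, κ > 0, ε ≥ 0, λ ≥ 0, let L : ℝ^k → ℝ be differentiable, and let β ∈ ℝ^k. Assume: (restricted strong convexity) for all Δ ∈ ℝ^k, (1/n)(L(β + Δ) − L(β) − ⟨∇L(β), Δ⟩) ≥ (κ/2)‖Δ‖₂²; (score bound) ‖(1/n)∇L(β)‖₂ ≤ ε; and β̂ is a global minimizer of b ↦ L(b) + λ√k‖b‖₂. Then ‖β̂ − β‖₂ ≤ (2/κ)(ε + λ√k/n). Moreover, if Z is an n×k real matrix and ν_max is the largest eigenvalue of D = (1/n)ZᵀZ, then the prediction error satisfies (1/n)‖Z(β̂ − β)‖₂² ≤ ν_max·(4/κ²)·(ε + λ√k/n)². -/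
open Matrix
open scoped RealInnerProductSpace

lemma quad_eq {k n : ℕ} (hn : 1 ≤ n) (Z : Matrix (Fin n) (Fin k) ℝ)
    (v : EuclideanSpace ℝ (Fin k)) :
    v ⬝ᵥ (((1 / (n : ℝ)) • (Zᵀ * Z)).mulVec v)
      = (1 / (n : ℝ)) * ‖(EuclideanSpace.equiv (Fin n) ℝ).symm (Z.mulVec v)‖ ^ 2 := by
  have h1 : ‖(EuclideanSpace.equiv (Fin n) ℝ).symm (Z.mulVec v)‖ ^ 2
      = Z.mulVec v ⬝ᵥ Z.mulVec v := by
    rw [EuclideanSpace.norm_eq, Real.sq_sqrt (by positivity)]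
    simp [dotProduct, sq_abs, pow_two]
  rw [h1, Matrix.smul_mulVec, dotProduct_smul, ← Matrix.mulVec_mulVec,
    Matrix.dotProduct_mulVec, Matrix.vecMul_transpose, smul_eq_mul]

/-- Deterministic core of Theorem 1(a): prediction error for the group lasso with known
design, under restricted strong convexity and a score bound. -/
theorem theorem1a_core {k n : ℕ} (hk : 1 ≤ k) (hn : 1 ≤ n)
    (κ ε lam : ℝ) (hκ : 0 < κ) (hε : 0 ≤ ε) (hlam : 0 ≤ lam)
    (L : EuclideanSpace ℝ (Fin k) → ℝ) (hL : Differentiable ℝ L)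
    (β βhat : EuclideanSpace ℝ (Fin k))
    (hRSC : ∀ Δ : EuclideanSpace ℝ (Fin k),
      κ / 2 * ‖Δ‖ ^ 2 ≤ (1 / (n : ℝ)) * (L (β + Δ) - L β - ⟪gradient L β, Δ⟫))
    (hscore : ‖(1 / (n : ℝ)) • gradient L β‖ ≤ ε)
    (hmin : ∀ b : EuclideanSpace ℝ (Fin k),
      L βhat + lam * Real.sqrt k * ‖βhat‖ ≤ L b + lam * Real.sqrt k * ‖b‖)
    (Z : Matrix (Fin n) (Fin k) ℝ) (νmax : ℝ)
    (hν : ∀ v : EuclideanSpace ℝ (Fin k),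
      v ⬝ᵥ (((1 / (n : ℝ)) • (Zᵀ * Z)).mulVec v) ≤ νmax * ‖v‖ ^ 2) :
    ‖βhat - β‖ ≤ 2 / κ * (ε + lam * Real.sqrt k / n) ∧
      (1 / (n : ℝ)) * ‖(EuclideanSpace.equiv (Fin n) ℝ).symm (Z.mulVec (βhat - β))‖ ^ 2
        ≤ νmax * (4 / κ ^ 2) * (ε + lam * Real.sqrt k / n) ^ 2 := by
  have hn0 : (0:ℝ) < n := by exact_mod_cast hn
  set Δ := βhat - β with hΔdef
  set C := ε + lam * Real.sqrt k / n with hC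
  clear_value Δ C
  have hC0 : 0 ≤ C := by rw [hC]; positivity
  have hβΔ : β + Δ = βhat := by rw [hΔdef]; abel
  -- gradient bound
  have hg : ‖gradient L β‖ ≤ n * ε := by
    have := hscore
    rw [norm_smul] at this
    have h1 : ‖(1 / (n : ℝ))‖ = 1 / n := by
      rw [Real.norm_eq_abs, abs_of_pos (by positivity)]
    rw [h1] at this
    calc ‖gradient L β‖ = n * ((1/(n:ℝ)) * ‖gradient L β‖) := by field_simp
      _ ≤ n * ε := by nlinarith
  -- loss difference bound
  have hloss : L (β + Δ) - L β ≤ lam * Real.sqrt k * ‖Δ‖ := by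
    rw [hβΔ]
    have h2 := hmin β
    have h3 : ‖β‖ - ‖βhat‖ ≤ ‖Δ‖ := by
      calc ‖β‖ - ‖βhat‖ ≤ ‖β - βhat‖ := norm_sub_norm_le _ _
        _ = ‖Δ‖ := by rw [hΔdef, norm_sub_rev]
    nlinarith [mul_nonneg hlam (Real.sqrt_nonneg (k:ℝ))]
  -- inner product bound
  have hip : -⟪gradient L β, Δ⟫ ≤ (n:ℝ) * ε * ‖Δ‖ := by
    have := abs_real_inner_le_norm (gradient L β) Δ
    have h4 : -⟪gradient L β, Δ⟫ ≤ ‖gradient L β‖ * ‖Δ‖ := by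
      nlinarith [abs_nonneg ⟪gradient L β, Δ⟫, neg_abs_le ⟪gradient L β, Δ⟫]
    nlinarith [norm_nonneg Δ]
  -- key inequality
  have hkey : κ / 2 * ‖Δ‖ ^ 2 ≤ C * ‖Δ‖ := by
    have h5 := hRSC Δ
    have h6 : (1/(n:ℝ)) * (L (β + Δ) - L β - ⟪gradient L β, Δ⟫)
        ≤ (1/(n:ℝ)) * (lam * Real.sqrt k * ‖Δ‖ + n * ε * ‖Δ‖) := by
      apply mul_le_mul_of_nonneg_left _ (by positivity)
      nlinarith
    have h7 : (1/(n:ℝ)) * (lam * Real.sqrt k * ‖Δ‖ + n * ε * ‖Δ‖) = C * ‖Δ‖ := by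
      rw [hC]; field_simp; ring
    linarith
  have hbound : ‖Δ‖ ≤ 2 / κ * C := by
    rcases eq_or_lt_of_le (norm_nonneg Δ) with h | h
    · rw [← h]; positivity
    · have h' : κ * ‖Δ‖ ≤ 2 * C := by
        have hkey' : κ / 2 * ‖Δ‖ * ‖Δ‖ ≤ C * ‖Δ‖ := by
          rw [mul_assoc, ← pow_two]; exact hkey
        have h'' := le_of_mul_le_mul_right hkey' h
        linarith
      rw [div_mul_eq_mul_div, le_div_iff₀ hκ]
      linarith
  refine ⟨hbound, ?_⟩
  -- nonnegativity of νmax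
  have hν0 : 0 ≤ νmax := by
    have h8 := hν (EuclideanSpace.single (⟨0, hk⟩ : Fin k) (1:ℝ))
    rw [quad_eq hn, EuclideanSpace.norm_single, norm_one, one_pow, mul_one] at h8
    exact le_trans (by positivity) h8
  have h10 := hν Δ
  rw [quad_eq hn] at h10
  rw [show βhat.ofLp - β.ofLp = Δ.ofLp by rw [hΔdef]; rfl]
  calc (1 / (n : ℝ)) * ‖(EuclideanSpace.equiv (Fin n) ℝ).symm (Z.mulVec Δ)‖ ^ 2
      ≤ νmax * ‖Δ‖ ^ 2 := h10
    _ ≤ νmax * (2 / κ * C) ^ 2 := by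
        apply mul_le_mul_of_nonneg_left _ hν0
        exact pow_le_pow_left₀ (norm_nonneg Δ) hbound 2
    _ = νmax * (4 / κ ^ 2) * C ^ 2 := by field_simp; ring
end

section
/- Deterministic core of Theorem 1(b) (uniform prediction error over q group-lasso regressions): let k ≥ 1, n ≥ 1, q ≥ 1, κ > 0, C₀ ≥ 0, λ ≥ 0, let Z be an n×k real matrix with ν_max the largest eigenvalue of D = (1/n)ZᵀZ, and for each j ∈ {1,…,q} let L_j : ℝ^k → ℝ be differentiable and β_j ∈ ℝ^k. Assume for every j: (restricted strong convexity) for all Δ ∈ ℝ^k, (1/n)(L_j(β_j + Δ) − L_j(β_j) − ⟨∇L_j(β_j), Δ⟩) ≥ (κ/2)‖Δ‖₂²; (uniform score bound) ‖(1/n)∇L_j(β_j)‖₂ ≤ C₀√(log q / n); and β̂_j is a global minimizer of b ↦ L_j(b) + λ√k‖b‖₂. Then max over j = 1,…,q of (1/n)‖Z(β̂_j − β_j)‖₂² is at most ν_max·(4/κ²)·(C₀√(log q / n) + λ√k/n)². -/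
open Matrix
open scoped RealInnerProductSpace

lemma quad_aux {n k : ℕ} (c : ℝ) (Z : Matrix (Fin n) (Fin k) ℝ) (v : Fin k → ℝ) :
    v ⬝ᵥ ((c • (Zᵀ * Z)).mulVec v) = c * ((Z.mulVec v) ⬝ᵥ (Z.mulVec v)) := by
  rw [Matrix.smul_mulVec, dotProduct_smul, smul_eq_mul,
    ← Matrix.mulVec_mulVec, Matrix.dotProduct_mulVec, Matrix.vecMul_transpose]

lemma norm_sq_aux {k : ℕ} (w : EuclideanSpace ℝ (Fin k)) :
    ‖w‖ ^ 2 = (w : Fin k → ℝ) ⬝ᵥ (w : Fin k → ℝ) := by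
  rw [← real_inner_self_eq_norm_sq]
  simp only [PiLp.inner_apply, dotProduct, RCLike.inner_apply, conj_trivial, mul_comm]

set_option maxHeartbeats 1000000 in
/-- Deterministic core of Theorem 1(b): uniform prediction error over `q` group-lasso
regressions.  The conclusion `∀ j, … ≤ B` expresses that the maximum over `j = 1,…,q`
is at most `B`. -/
theorem theorem1b_core {k n q : ℕ} (hk : 1 ≤ k) (hn : 1 ≤ n) (hq : 1 ≤ q)
    (κ C₀ lam : ℝ) (hκ : 0 < κ) (hC₀ : 0 ≤ C₀) (hlam : 0 ≤ lam)
    (Z : Matrix (Fin n) (Fin k) ℝ) (νmax : ℝ)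
    (hν : ∀ v : EuclideanSpace ℝ (Fin k),
      v ⬝ᵥ (((1 / (n : ℝ)) • (Zᵀ * Z)).mulVec v) ≤ νmax * ‖v‖ ^ 2)
    (L : Fin q → EuclideanSpace ℝ (Fin k) → ℝ) (hL : ∀ j, Differentiable ℝ (L j))
    (β βhat : Fin q → EuclideanSpace ℝ (Fin k))
    (hRSC : ∀ j, ∀ Δ : EuclideanSpace ℝ (Fin k),
      κ / 2 * ‖Δ‖ ^ 2 ≤ (1 / (n : ℝ)) *
        (L j (β j + Δ) - L j (β j) - ⟪gradient (L j) (β j), Δ⟫))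
    (hscore : ∀ j, ‖(1 / (n : ℝ)) • gradient (L j) (β j)‖
      ≤ C₀ * Real.sqrt (Real.log q / n))
    (hmin : ∀ j, ∀ b : EuclideanSpace ℝ (Fin k),
      L j (βhat j) + lam * Real.sqrt k * ‖βhat j‖ ≤ L j b + lam * Real.sqrt k * ‖b‖) :
    ∀ j, (1 / (n : ℝ)) *
        ‖(EuclideanSpace.equiv (Fin n) ℝ).symm (Z.mulVec (βhat j - β j))‖ ^ 2
      ≤ νmax * (4 / κ ^ 2) *
        (C₀ * Real.sqrt (Real.log q / n) + lam * Real.sqrt k / n) ^ 2 := by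
  intro j
  have hn0 : (0:ℝ) < n := by exact_mod_cast hn
  obtain ⟨d, hd⟩ : ∃ d : EuclideanSpace ℝ (Fin k), d = βhat j - β j := ⟨_, rfl⟩
  have h1 : 0 ≤ C₀ * Real.sqrt (Real.log q / n) := mul_nonneg hC₀ (Real.sqrt_nonneg _)
  have h2 : 0 ≤ lam * Real.sqrt k / n := by positivity
  obtain ⟨s, hs⟩ : ∃ s : ℝ,
      s = C₀ * Real.sqrt (Real.log q / n) + lam * Real.sqrt k / n := ⟨_, rfl⟩
  rw [← WithLp.ofLp_sub, ← hd, ← hs]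
  have hs0 : 0 ≤ s := by rw [hs]; linarith
  -- bound on ‖d‖
  have hdbound : ‖d‖ ≤ 2 / κ * s := by
    have hRSCd := hRSC j d
    have hβd : β j + d = βhat j := by simp [hd]
    rw [hβd] at hRSCd
    have hmin' : L j (βhat j) - L j (β j) ≤ lam * Real.sqrt k * ‖d‖ := by
      have hm := hmin j (β j)
      have htri : ‖β j‖ - ‖βhat j‖ ≤ ‖d‖ := by
        have h := norm_sub_norm_le (β j) (βhat j)
        have heq : ‖β j - βhat j‖ = ‖d‖ := by rw [hd, norm_sub_rev]
        linarith
      nlinarith [mul_nonneg hlam (Real.sqrt_nonneg (k:ℝ))]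
    have hcs : -⟪gradient (L j) (β j), d⟫ ≤ ‖gradient (L j) (β j)‖ * ‖d‖ := by
      linarith [abs_real_inner_le_norm (gradient (L j) (β j)) d,
        neg_le_abs (⟪gradient (L j) (β j), d⟫)]
    have hg : (1 / (n:ℝ)) * ‖gradient (L j) (β j)‖ ≤ C₀ * Real.sqrt (Real.log q / n) := by
      have h := hscore j
      rwa [norm_smul, Real.norm_eq_abs, abs_of_nonneg (by positivity : (0:ℝ) ≤ 1 / (n:ℝ))]
        at h
    have key : κ / 2 * ‖d‖ ^ 2 ≤ s * ‖d‖ := by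
      have hninv : (0:ℝ) ≤ 1 / (n:ℝ) := by positivity
      have hA : (1 / (n:ℝ)) * (L j (βhat j) - L j (β j) - ⟪gradient (L j) (β j), d⟫)
          ≤ (1 / (n:ℝ)) * (lam * Real.sqrt k * ‖d‖)
            + (1 / (n:ℝ)) * (‖gradient (L j) (β j)‖ * ‖d‖) := by nlinarith
      have hB : (1 / (n:ℝ)) * (‖gradient (L j) (β j)‖ * ‖d‖)
          ≤ C₀ * Real.sqrt (Real.log q / n) * ‖d‖ := by
        nlinarith [norm_nonneg d, mul_le_mul_of_nonneg_right hg (norm_nonneg d)]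
      have hC : (1 / (n:ℝ)) * (lam * Real.sqrt k * ‖d‖)
          = lam * Real.sqrt k / n * ‖d‖ := by ring
      rw [hs]; nlinarith
    rcases eq_or_lt_of_le (norm_nonneg d) with h0 | hpos
    · rw [← h0]; positivity
    · have hkd : κ / 2 * ‖d‖ ≤ s := by nlinarith
      rw [div_mul_eq_mul_div, le_div_iff₀ hκ]
      nlinarith
  have hd2 : ‖d‖ ^ 2 ≤ 4 / κ ^ 2 * s ^ 2 := by
    have h := mul_self_le_mul_self (norm_nonneg d) hdbound
    have heq : (2 / κ * s) * (2 / κ * s) = 4 / κ ^ 2 * s ^ 2 := by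
      field_simp; ring
    nlinarith
  have hν0 : 0 ≤ νmax := by
    set v : EuclideanSpace ℝ (Fin k) := EuclideanSpace.single (⟨0, hk⟩ : Fin k) (1:ℝ) with hv
    have hu := hν v
    have hun : ‖v‖ = 1 := by rw [hv, EuclideanSpace.norm_single, norm_one]
    rw [hun, quad_aux] at hu
    have hpos : (0:ℝ) ≤ (1 / (n:ℝ)) * ((Z.mulVec v) ⬝ᵥ (Z.mulVec v)) := by
      have : (0:ℝ) ≤ (Z.mulVec v) ⬝ᵥ (Z.mulVec v) :=
        Finset.sum_nonneg fun i _ => mul_self_nonneg _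
      positivity
    nlinarith
  -- prediction error = quadratic form
  have hquad : (1 / (n : ℝ)) *
      ‖(EuclideanSpace.equiv (Fin n) ℝ).symm (Z.mulVec d)‖ ^ 2
      = (d : Fin k → ℝ) ⬝ᵥ (((1 / (n : ℝ)) • (Zᵀ * Z)).mulVec (d : Fin k → ℝ)) := by
    rw [quad_aux, norm_sq_aux]
    congr 1
  rw [hquad]
  calc (d : Fin k → ℝ) ⬝ᵥ (((1 / (n : ℝ)) • (Zᵀ * Z)).mulVec (d : Fin k → ℝ))
      ≤ νmax * ‖d‖ ^ 2 := hν d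
    _ ≤ νmax * (4 / κ ^ 2 * s ^ 2) := mul_le_mul_of_nonneg_left hd2 hν0
    _ = νmax * (4 / κ ^ 2) * s ^ 2 := by ring
end

section
/- Measurement-error bias bound (Step 5 of the proof of Theorem 2, combined): fix n ≥ 1, k ≥ 1, γ ∈ ℝ, an n×k real design matrix Z with rows z_i, responses y_1, …, y_n ∈ [0, 1], and an n×k perturbation matrix U with |U_{ij}| ≤ δ_∞ for all entries (δ_∞ ≥ 0). Let ν_max be the largest eigenvalue of D = (1/n)ZᵀZ, and for an n×k matrix X with rows x_i define L(b; X) = Σ_{i=1}^n [log(1 + exp(γ + ⟨x_i, b⟩)) − y_i·(γ + ⟨x_i, b⟩)]. Then for all β, β̂ ∈ ℝ^k, with B = max(‖β‖₂, ‖β̂‖₂), |L(β̂; Z+U) − L(β̂; Z) − L(β; Z+U) + L(β; Z)| ≤ n·δ_∞·√k·(1 + (√ν_max/4)·B)·‖β̂ − β‖₂. -/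
open Matrix

noncomputable def lsig (x : ℝ) : ℝ := Real.exp x / (1 + Real.exp x)

lemma lsig_pos (x : ℝ) : 0 < lsig x := by unfold lsig; positivity

lemma lsig_lt_one (x : ℝ) : lsig x < 1 := by
  unfold lsig
  rw [div_lt_one (by positivity)]
  linarith

lemma hasDerivAt_logexp (x : ℝ) :
    HasDerivAt (fun x => Real.log (1 + Real.exp x)) (lsig x) x := by
  have h1 : (1 : ℝ) + Real.exp x ≠ 0 := by positivity
  simpa [lsig] using ((Real.hasDerivAt_exp x).const_add 1).log h1

lemma hasDerivAt_lsig (x : ℝ) :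
    HasDerivAt lsig (Real.exp x / (1 + Real.exp x) ^ 2) x := by
  have h1 : (1 : ℝ) + Real.exp x ≠ 0 := by positivity
  have := (Real.hasDerivAt_exp x).div ((Real.hasDerivAt_exp x).const_add 1) h1
  refine this.congr_deriv ?_
  ring

lemma lsig_lipschitz (a b : ℝ) : |lsig a - lsig b| ≤ |a - b| / 4 := by
  have h := Convex.norm_image_sub_le_of_norm_hasDerivWithin_le
    (f := lsig) (f' := fun x => Real.exp x / (1 + Real.exp x) ^ 2) (s := Set.univ)
    (C := 1/4) (fun x _ => (hasDerivAt_lsig x).hasDerivWithinAt)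
    (fun x _ => by
      have he : 0 < Real.exp x := Real.exp_pos x
      rw [Real.norm_eq_abs, abs_of_nonneg (by positivity)]
      rw [div_le_div_iff₀ (by positivity) (by norm_num)]
      nlinarith [sq_nonneg (1 - Real.exp x)])
    convex_univ (Set.mem_univ b) (Set.mem_univ a)
  rw [Real.norm_eq_abs, Real.norm_eq_abs] at h
  linarith

lemma sum_abs_le_sqrt {m : ℕ} (v : Fin m → ℝ) :
    ∑ i, |v i| ≤ Real.sqrt m * Real.sqrt (∑ i, (v i) ^ 2) := by
  have h := Finset.sum_mul_sq_le_sq_mul_sq Finset.univ (fun _ => (1:ℝ)) (fun i => |v i|)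
  have h0 : 0 ≤ ∑ i, |v i| := Finset.sum_nonneg fun i _ => abs_nonneg _
  rw [← Real.sqrt_sq h0, ← Real.sqrt_mul (by positivity)]
  apply Real.sqrt_le_sqrt
  simpa [sq_abs, Finset.card_univ] using h

lemma dot_abs_le {k : ℕ} (δ : ℝ) (hδ : 0 ≤ δ) (u : Fin k → ℝ) (hu : ∀ j, |u j| ≤ δ)
    (v : EuclideanSpace ℝ (Fin k)) : |u ⬝ᵥ v| ≤ δ * (Real.sqrt k * ‖v‖) := by
  have h1 : |u ⬝ᵥ v| ≤ ∑ j, δ * |v j| := by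
    refine (Finset.abs_sum_le_sum_abs _ _).trans ?_
    refine Finset.sum_le_sum fun j _ => ?_
    rw [abs_mul]
    exact mul_le_mul_of_nonneg_right (hu j) (abs_nonneg _)
  rw [← Finset.mul_sum] at h1
  refine h1.trans (mul_le_mul_of_nonneg_left ?_ hδ)
  rw [EuclideanSpace.norm_eq]
  simpa [Real.norm_eq_abs, sq_abs] using sum_abs_le_sqrt (fun j => v j)

/-- The logistic negative log-likelihood with intercept `γ`, design matrix `X`
(with rows `X i`) and responses `y`. -/
noncomputable def logisticNLL {n k : ℕ} (γ : ℝ) (y : Fin n → ℝ)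
    (X : Matrix (Fin n) (Fin k) ℝ) (b : EuclideanSpace ℝ (Fin k)) : ℝ :=
  ∑ i, (Real.log (1 + Real.exp (γ + X i ⬝ᵥ b)) - y i * (γ + X i ⬝ᵥ b))

/-- Measurement-error bias bound (Step 5 of the proof of Theorem 2, combined):
the difference `L(β̂; Z+U) − L(β̂; Z) − L(β; Z+U) + L(β; Z)` is bounded by
`n δ_∞ √k (1 + (√νmax/4) B) ‖β̂ − β‖₂` with `B = max(‖β‖₂, ‖β̂‖₂)`. -/
theorem measurement_error_bias_bound {n k : ℕ} (hn : 1 ≤ n) (hk : 1 ≤ k) (γ : ℝ)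
    (Z U : Matrix (Fin n) (Fin k) ℝ)
    (y : Fin n → ℝ) (hy : ∀ i, y i ∈ Set.Icc (0 : ℝ) 1)
    (δinf : ℝ) (hδ : 0 ≤ δinf) (hU : ∀ i j, |U i j| ≤ δinf)
    (νmax : ℝ)
    (hν : ∀ v : EuclideanSpace ℝ (Fin k),
      v ⬝ᵥ (((1 / (n : ℝ)) • (Zᵀ * Z)).mulVec v) ≤ νmax * ‖v‖ ^ 2) :
    ∀ β βhat : EuclideanSpace ℝ (Fin k),
      |logisticNLL γ y (Z + U) βhat - logisticNLL γ y Z βhat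
          - logisticNLL γ y (Z + U) β + logisticNLL γ y Z β|
        ≤ (n : ℝ) * δinf * Real.sqrt k *
            (1 + Real.sqrt νmax / 4 * max ‖β‖ ‖βhat‖) * ‖βhat - β‖ := by
  intro β βhat
  by_cases hd0 : βhat - β = 0
  · have hβ : βhat = β := sub_eq_zero.mp hd0
    rw [hβ]
    rw [show logisticNLL γ y (Z+U) β - logisticNLL γ y Z β - logisticNLL γ y (Z+U) β
          + logisticNLL γ y Z β = 0 by ring]
    simp
  set d : EuclideanSpace ℝ (Fin k) := βhat - β with hd
  have hdn : 0 < ‖d‖ := norm_pos_iff.mpr hd0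
  have hnpos : (0:ℝ) < (n:ℝ) := by exact_mod_cast hn
  -- quadratic form facts
  have hZsq : ∀ v : EuclideanSpace ℝ (Fin k),
      ∑ i, (Z i ⬝ᵥ v) ^ 2 ≤ (n:ℝ) * νmax * ‖v‖ ^ 2 := by
    intro v
    have h1 : v ⬝ᵥ (Zᵀ * Z) *ᵥ v = (Z *ᵥ (v : Fin k → ℝ)) ⬝ᵥ (Z *ᵥ v) := by
      rw [← Matrix.mulVec_mulVec, Matrix.dotProduct_mulVec v Zᵀ, Matrix.vecMul_transpose]
    have h2 : ∑ i, (Z i ⬝ᵥ v) ^ 2 = (Z *ᵥ (v : Fin k → ℝ)) ⬝ᵥ (Z *ᵥ v) := by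
      simp [Matrix.mulVec, dotProduct, sq]
    have h3 := hν v
    rw [Matrix.smul_mulVec, dotProduct_smul, smul_eq_mul] at h3
    rw [h2, ← h1]
    have := mul_le_mul_of_nonneg_left h3 hnpos.le
    calc v ⬝ᵥ (Zᵀ * Z) *ᵥ v = (n:ℝ) * (1 / (n:ℝ) * (v ⬝ᵥ (Zᵀ * Z) *ᵥ v)) := by
          field_simp
      _ ≤ (n:ℝ) * (νmax * ‖v‖ ^ 2) := this
      _ = (n:ℝ) * νmax * ‖v‖ ^ 2 := by ring
  have hsq_nonneg : (0:ℝ) ≤ ∑ i, (Z i ⬝ᵥ d) ^ 2 :=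
    Finset.sum_nonneg fun i _ => sq_nonneg _
  have hν0 : 0 ≤ νmax := by
    by_contra h
    push_neg at h
    have hp : 0 < (n:ℝ) * ‖d‖ ^ 2 := mul_pos hnpos (pow_pos hdn 2)
    nlinarith [hsq_nonneg.trans (hZsq d)]
  set B : ℝ := max ‖β‖ ‖βhat‖ with hB
  have hB0 : 0 ≤ B := le_trans (norm_nonneg β) (le_max_left _ _)
  have hseg : ∀ t : ℝ, t ∈ Set.Icc (0:ℝ) 1 → ‖β + t • d‖ ≤ B := by
    intro t ht
    have h1 : β + t • d = (1 - t) • β + t • βhat := by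
      rw [hd]; module
    rw [h1]
    calc ‖(1 - t) • β + t • βhat‖ ≤ ‖(1 - t) • β‖ + ‖t • βhat‖ := norm_add_le _ _
      _ = (1 - t) * ‖β‖ + t * ‖βhat‖ := by
          rw [norm_smul, norm_smul, Real.norm_eq_abs, Real.norm_eq_abs,
            abs_of_nonneg (by linarith [ht.2] : (0:ℝ) ≤ 1 - t), abs_of_nonneg ht.1]
      _ ≤ (1 - t) * B + t * B := add_le_add
            (mul_le_mul_of_nonneg_left (le_max_left _ _) (by linarith [ht.2]))
            (mul_le_mul_of_nonneg_left (le_max_right _ _) ht.1)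
      _ = B := by ring
  have hdot : ∀ (w : Fin k → ℝ) (t : ℝ), w ⬝ᵥ (β + t • d) = w ⬝ᵥ β + t * (w ⬝ᵥ d) := by
    intro w t
    show w ⬝ᵥ ((β : Fin k → ℝ) + t • (d : Fin k → ℝ)) = _
    rw [dotProduct_add, dotProduct_smul, smul_eq_mul]
  have hsplit : ∀ (w : Fin k → ℝ), w ⬝ᵥ βhat = w ⬝ᵥ β + w ⬝ᵥ d := by
    intro w
    have e : βhat = β + (1:ℝ) • d := by rw [hd]; module
    rw [e, WithLp.ofLp_add, WithLp.ofLp_smul, hdot w 1, one_mul]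
  have hrow : ∀ (i : Fin n) (v : Fin k → ℝ), (Z + U) i ⬝ᵥ v = Z i ⬝ᵥ v + U i ⬝ᵥ v := by
    intro i v
    show (Z i + U i) ⬝ᵥ v = _
    rw [add_dotProduct]
  -- derivative of the path function
  have hderiv : ∀ t : ℝ, HasDerivAt
      (fun t : ℝ => ∑ i, (Real.log (1 + Real.exp (γ + (Z + U) i ⬝ᵥ β + t * ((Z + U) i ⬝ᵥ d)))
        - Real.log (1 + Real.exp (γ + Z i ⬝ᵥ β + t * (Z i ⬝ᵥ d)))
        - y i * (U i ⬝ᵥ β + t * (U i ⬝ᵥ d))))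
      (∑ i, (lsig (γ + (Z + U) i ⬝ᵥ β + t * ((Z + U) i ⬝ᵥ d)) * ((Z + U) i ⬝ᵥ d)
        - lsig (γ + Z i ⬝ᵥ β + t * (Z i ⬝ᵥ d)) * (Z i ⬝ᵥ d)
        - y i * (U i ⬝ᵥ d))) t := by
    intro t
    apply HasDerivAt.fun_sum
    intro i _
    have d1 : HasDerivAt (fun t : ℝ => Real.log (1 + Real.exp (γ + (Z + U) i ⬝ᵥ β + t * ((Z + U) i ⬝ᵥ d))))
        (lsig (γ + (Z + U) i ⬝ᵥ β + t * ((Z + U) i ⬝ᵥ d)) * ((Z + U) i ⬝ᵥ d)) t := by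
      exact
        (hasDerivAt_logexp (γ + (Z + U) i ⬝ᵥ β + t * ((Z + U) i ⬝ᵥ d))).comp t
          ((hasDerivAt_mul_const ((Z + U) i ⬝ᵥ d)).const_add (γ + (Z + U) i ⬝ᵥ β))
    have d2 : HasDerivAt (fun t : ℝ => Real.log (1 + Real.exp (γ + Z i ⬝ᵥ β + t * (Z i ⬝ᵥ d))))
        (lsig (γ + Z i ⬝ᵥ β + t * (Z i ⬝ᵥ d)) * (Z i ⬝ᵥ d)) t := by
      exact
        (hasDerivAt_logexp (γ + Z i ⬝ᵥ β + t * (Z i ⬝ᵥ d))).comp t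
          ((hasDerivAt_mul_const (Z i ⬝ᵥ d)).const_add (γ + Z i ⬝ᵥ β))
    have d3 : HasDerivAt (fun t : ℝ => y i * (U i ⬝ᵥ β + t * (U i ⬝ᵥ d))) (y i * (U i ⬝ᵥ d)) t :=
      ((hasDerivAt_mul_const (U i ⬝ᵥ d)).const_add (U i ⬝ᵥ β)).const_mul (y i)
    exact (d1.sub d2).sub d3
  -- ℓ¹ bound on the rows of Z applied to d
  have hsum1 : ∑ i, |Z i ⬝ᵥ d| ≤ (n:ℝ) * Real.sqrt νmax * ‖d‖ := by
    refine (sum_abs_le_sqrt _).trans ?_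
    have h5 : Real.sqrt ((n:ℝ) * νmax * ‖d‖ ^ 2)
        = Real.sqrt n * Real.sqrt νmax * ‖d‖ := by
      rw [Real.sqrt_mul (by positivity), Real.sqrt_sq (norm_nonneg d),
        Real.sqrt_mul hnpos.le]
    calc Real.sqrt n * Real.sqrt (∑ i, (Z i ⬝ᵥ d) ^ 2)
        ≤ Real.sqrt n * (Real.sqrt n * Real.sqrt νmax * ‖d‖) := by
          rw [← h5]
          exact mul_le_mul_of_nonneg_left (Real.sqrt_le_sqrt (hZsq d)) (Real.sqrt_nonneg _)
      _ = (Real.sqrt n * Real.sqrt n) * Real.sqrt νmax * ‖d‖ := by ring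
      _ = (n:ℝ) * Real.sqrt νmax * ‖d‖ := by rw [Real.mul_self_sqrt hnpos.le]
  -- bound on the derivative along the segment
  have hbound : ∀ t ∈ Set.Icc (0:ℝ) 1,
      ‖∑ i, (lsig (γ + (Z + U) i ⬝ᵥ β + t * ((Z + U) i ⬝ᵥ d)) * ((Z + U) i ⬝ᵥ d)
        - lsig (γ + Z i ⬝ᵥ β + t * (Z i ⬝ᵥ d)) * (Z i ⬝ᵥ d)
        - y i * (U i ⬝ᵥ d))‖
        ≤ (n : ℝ) * δinf * Real.sqrt k * (1 + Real.sqrt νmax / 4 * B) * ‖d‖ := by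
    intro t ht
    rw [Real.norm_eq_abs]
    have hterm : ∀ i : Fin n,
        |lsig (γ + (Z + U) i ⬝ᵥ β + t * ((Z + U) i ⬝ᵥ d)) * ((Z + U) i ⬝ᵥ d)
          - lsig (γ + Z i ⬝ᵥ β + t * (Z i ⬝ᵥ d)) * (Z i ⬝ᵥ d)
          - y i * (U i ⬝ᵥ d)|
          ≤ δinf * (Real.sqrt k * ‖d‖) + δinf * (Real.sqrt k * B) / 4 * |Z i ⬝ᵥ d| := by
      intro i
      have e1 : lsig (γ + (Z + U) i ⬝ᵥ β + t * ((Z + U) i ⬝ᵥ d)) * ((Z + U) i ⬝ᵥ d)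
          - lsig (γ + Z i ⬝ᵥ β + t * (Z i ⬝ᵥ d)) * (Z i ⬝ᵥ d) - y i * (U i ⬝ᵥ d)
          = (lsig (γ + (Z + U) i ⬝ᵥ β + t * ((Z + U) i ⬝ᵥ d)) - y i) * (U i ⬝ᵥ d)
            + (lsig (γ + (Z + U) i ⬝ᵥ β + t * ((Z + U) i ⬝ᵥ d))
              - lsig (γ + Z i ⬝ᵥ β + t * (Z i ⬝ᵥ d))) * (Z i ⬝ᵥ d) := by
        rw [hrow i d]; ring
      rw [e1]
      have h1 : |(lsig (γ + (Z + U) i ⬝ᵥ β + t * ((Z + U) i ⬝ᵥ d)) - y i) * (U i ⬝ᵥ d)|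
          ≤ δinf * (Real.sqrt k * ‖d‖) := by
        rw [abs_mul]
        have hy1 := (hy i).1
        have hy2 := (hy i).2
        have hl1 := lsig_pos (γ + (Z + U) i ⬝ᵥ β + t * ((Z + U) i ⬝ᵥ d))
        have hl2 := lsig_lt_one (γ + (Z + U) i ⬝ᵥ β + t * ((Z + U) i ⬝ᵥ d))
        have := dot_abs_le δinf hδ (U i) (fun j => hU i j) d
        have habs : |lsig (γ + (Z + U) i ⬝ᵥ β + t * ((Z + U) i ⬝ᵥ d)) - y i| ≤ 1 :=
          abs_le.mpr ⟨by linarith, by linarith⟩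
        calc |lsig (γ + (Z + U) i ⬝ᵥ β + t * ((Z + U) i ⬝ᵥ d)) - y i| * |U i ⬝ᵥ d|
            ≤ 1 * (δinf * (Real.sqrt k * ‖d‖)) :=
              mul_le_mul habs this (abs_nonneg _) zero_le_one
          _ = δinf * (Real.sqrt k * ‖d‖) := one_mul _
      have hdiff : γ + (Z + U) i ⬝ᵥ β + t * ((Z + U) i ⬝ᵥ d)
          - (γ + Z i ⬝ᵥ β + t * (Z i ⬝ᵥ d)) = U i ⬝ᵥ (β + t • d) := by
        rw [hdot (U i) t, hrow i β, hrow i d]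
        ring
      have h2 : |(lsig (γ + (Z + U) i ⬝ᵥ β + t * ((Z + U) i ⬝ᵥ d))
            - lsig (γ + Z i ⬝ᵥ β + t * (Z i ⬝ᵥ d))) * (Z i ⬝ᵥ d)|
          ≤ δinf * (Real.sqrt k * B) / 4 * |Z i ⬝ᵥ d| := by
        rw [abs_mul]
        refine mul_le_mul_of_nonneg_right ?_ (abs_nonneg _)
        refine (lsig_lipschitz _ _).trans ?_
        rw [hdiff]
        have hU2 := dot_abs_le δinf hδ (U i) (fun j => hU i j) (β + t • d)
        rw [WithLp.ofLp_add, WithLp.ofLp_smul] at hU2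
        have h3 : δinf * (Real.sqrt k * ‖β + t • d‖) ≤ δinf * (Real.sqrt k * B) :=
          mul_le_mul_of_nonneg_left
            (mul_le_mul_of_nonneg_left (hseg t ht) (Real.sqrt_nonneg _)) hδ
        linarith [hU2.trans h3]
      exact (abs_add_le _ _).trans (add_le_add h1 h2)
    have hc2 : (0:ℝ) ≤ δinf * (Real.sqrt k * B) / 4 := by positivity
    calc |∑ i, (lsig (γ + (Z + U) i ⬝ᵥ β + t * ((Z + U) i ⬝ᵥ d)) * ((Z + U) i ⬝ᵥ d)
          - lsig (γ + Z i ⬝ᵥ β + t * (Z i ⬝ᵥ d)) * (Z i ⬝ᵥ d)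
          - y i * (U i ⬝ᵥ d))|
        ≤ ∑ i, |lsig (γ + (Z + U) i ⬝ᵥ β + t * ((Z + U) i ⬝ᵥ d)) * ((Z + U) i ⬝ᵥ d)
          - lsig (γ + Z i ⬝ᵥ β + t * (Z i ⬝ᵥ d)) * (Z i ⬝ᵥ d)
          - y i * (U i ⬝ᵥ d)| := Finset.abs_sum_le_sum_abs _ _
      _ ≤ ∑ i, (δinf * (Real.sqrt k * ‖d‖) + δinf * (Real.sqrt k * B) / 4 * |Z i ⬝ᵥ d|) :=
          Finset.sum_le_sum fun i _ => hterm i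
      _ = (n:ℝ) * (δinf * (Real.sqrt k * ‖d‖))
          + δinf * (Real.sqrt k * B) / 4 * ∑ i, |Z i ⬝ᵥ d| := by
          rw [Finset.sum_add_distrib, Finset.sum_const, ← Finset.mul_sum]
          simp [Finset.card_univ, nsmul_eq_mul]
      _ ≤ (n:ℝ) * (δinf * (Real.sqrt k * ‖d‖))
          + δinf * (Real.sqrt k * B) / 4 * ((n:ℝ) * Real.sqrt νmax * ‖d‖) := by
          exact add_le_add le_rfl (mul_le_mul_of_nonneg_left hsum1 hc2)
      _ = (n : ℝ) * δinf * Real.sqrt k * (1 + Real.sqrt νmax / 4 * B) * ‖d‖ := by ring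
  -- mean value inequality
  have hMVT := Convex.norm_image_sub_le_of_norm_hasDerivWithin_le
    (f := fun t : ℝ => ∑ i, (Real.log (1 + Real.exp (γ + (Z + U) i ⬝ᵥ β + t * ((Z + U) i ⬝ᵥ d)))
        - Real.log (1 + Real.exp (γ + Z i ⬝ᵥ β + t * (Z i ⬝ᵥ d)))
        - y i * (U i ⬝ᵥ β + t * (U i ⬝ᵥ d))))
    (f' := fun t : ℝ => ∑ i, (lsig (γ + (Z + U) i ⬝ᵥ β + t * ((Z + U) i ⬝ᵥ d)) * ((Z + U) i ⬝ᵥ d)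
        - lsig (γ + Z i ⬝ᵥ β + t * (Z i ⬝ᵥ d)) * (Z i ⬝ᵥ d)
        - y i * (U i ⬝ᵥ d)))
    (s := Set.Icc (0:ℝ) 1)
    (fun x _ => (hderiv x).hasDerivWithinAt) hbound (convex_Icc 0 1)
    (Set.left_mem_Icc.mpr zero_le_one) (Set.right_mem_Icc.mpr zero_le_one)
  simp only [Real.norm_eq_abs] at hMVT
  have hEq : logisticNLL γ y (Z + U) βhat - logisticNLL γ y Z βhat
      - logisticNLL γ y (Z + U) β + logisticNLL γ y Z β
      = (∑ i, (Real.log (1 + Real.exp (γ + (Z + U) i ⬝ᵥ β + 1 * ((Z + U) i ⬝ᵥ d)))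
          - Real.log (1 + Real.exp (γ + Z i ⬝ᵥ β + 1 * (Z i ⬝ᵥ d)))
          - y i * (U i ⬝ᵥ β + 1 * (U i ⬝ᵥ d))))
        - (∑ i, (Real.log (1 + Real.exp (γ + (Z + U) i ⬝ᵥ β + 0 * ((Z + U) i ⬝ᵥ d)))
          - Real.log (1 + Real.exp (γ + Z i ⬝ᵥ β + 0 * (Z i ⬝ᵥ d)))
          - y i * (U i ⬝ᵥ β + 0 * (U i ⬝ᵥ d)))) := by
    simp only [logisticNLL]
    rw [← Finset.sum_sub_distrib, ← Finset.sum_sub_distrib, ← Finset.sum_add_distrib,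
      ← Finset.sum_sub_distrib]
    refine Finset.sum_congr rfl fun i _ => ?_
    rw [hsplit ((Z + U) i), hsplit (Z i), hrow i β, hrow i d]
    ring_nf
  rw [hEq]
  calc |(∑ i, (Real.log (1 + Real.exp (γ + (Z + U) i ⬝ᵥ β + 1 * ((Z + U) i ⬝ᵥ d)))
          - Real.log (1 + Real.exp (γ + Z i ⬝ᵥ β + 1 * (Z i ⬝ᵥ d)))
          - y i * (U i ⬝ᵥ β + 1 * (U i ⬝ᵥ d))))
        - (∑ i, (Real.log (1 + Real.exp (γ + (Z + U) i ⬝ᵥ β + 0 * ((Z + U) i ⬝ᵥ d)))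
          - Real.log (1 + Real.exp (γ + Z i ⬝ᵥ β + 0 * (Z i ⬝ᵥ d)))
          - y i * (U i ⬝ᵥ β + 0 * (U i ⬝ᵥ d))))|
      ≤ (n : ℝ) * δinf * Real.sqrt k * (1 + Real.sqrt νmax / 4 * B) * ‖d‖ * |(1:ℝ) - 0| :=
        hMVT
    _ = (n : ℝ) * δinf * Real.sqrt k * (1 + Real.sqrt νmax / 4 * B) * ‖d‖ := by
        norm_num
    _ = (n : ℝ) * δinf * Real.sqrt k *
          (1 + Real.sqrt νmax / 4 * max ‖β‖ ‖βhat‖) * ‖βhat - β‖ := by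
        rw [hB, hd]
end
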